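/- Let P be a maximal P2-packing of a graph G and let Q be a P2-packing with |Q| = |P| + 1 maximizing the number of paths shared with P. Then for every p ∈ P that is not (as an edge set) a member of Q, there exist two distinct paths q₁, q₂ ∈ Q with |V(p) ∩ V(qᵢ)| ≥ 1 for i = 1, 2. -/

import Mathlib

open Finset

def P2Verts {V : Type*} [DecidableEq V] (p : V × V × V) : Finset V := {p.1, p.2.1, p.2.2}

def IsP2 {V : Type*} (G : SimpleGraph V) (p : V × V × V) : Prop :=
  G.Adj p.1 p.2.1 ∧ G.Adj p.2.1 p.2.2 ∧ p.1 ≠ p.2.2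

def IsP2Packing {V : Type*} [DecidableEq V] (G : SimpleGraph V) (P : Finset (V × V × V)) : Prop :=
  (∀ p ∈ P, IsP2 G p) ∧
  ∀ p ∈ P, ∀ q ∈ P, p ≠ q → Disjoint (P2Verts p) (P2Verts q)

def PackVerts {V : Type*} [DecidableEq V] (P : Finset (V × V × V)) : Finset V :=
  P.biUnion P2Verts

def IsMaximalP2Packing {V : Type*} [DecidableEq V] (G : SimpleGraph V)
    (P : Finset (V × V × V)) : Prop :=
  IsP2Packing G P ∧ ∀ q, IsP2 G q → ¬ Disjoint (P2Verts q) (PackVerts P)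

def P2Edges {V : Type*} [DecidableEq V] (p : V × V × V) : Finset (Sym2 V) :=
  {s(p.1, p.2.1), s(p.2.1, p.2.2)}

/-- The number of paths of Q whose edge set equals the edge set of some path of P. -/
def sharedPathCount {V : Type*} [DecidableEq V] (P Q : Finset (V × V × V)) : ℕ :=
  (Q.filter (fun q => ∃ p ∈ P, P2Edges p = P2Edges q)).card

lemma verts_eq_of_edges_eq {V : Type*} [DecidableEq V] {a b : V × V × V}
    (h : P2Edges a = P2Edges b) : P2Verts a = P2Verts b := by
  have key : ∀ (c : V × V × V) (x : V), x ∈ P2Verts c ↔ ∃ e ∈ P2Edges c, x ∈ e := by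
    rintro ⟨c1, c2, c3⟩ x
    simp [P2Verts, P2Edges, Sym2.mem_iff]
    tauto
  ext x
  rw [key a, key b, h]

lemma shared_le {V : Type*} [DecidableEq V] {G : SimpleGraph V} (P : Finset (V × V × V))
    {Q : Finset (V × V × V)} (hQ : IsP2Packing G Q) :
    sharedPathCount P Q ≤ P.card := by
  classical
  unfold sharedPathCount
  apply Finset.card_le_card_of_injOn
    (fun q => if h : ∃ p ∈ P, P2Edges p = P2Edges q then h.choose else q)
  · intro q hq
    simp only [Finset.mem_coe, mem_filter] at hq
    simp only [dif_pos hq.2]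
    exact hq.2.choose_spec.1
  · intro q₁ h1 q₂ h2 heq
    simp only [Finset.mem_coe, mem_filter] at h1 h2
    simp only [dif_pos h1.2, dif_pos h2.2] at heq
    have e1 := h1.2.choose_spec.2
    have e2 := h2.2.choose_spec.2
    have hqe : P2Edges q₁ = P2Edges q₂ := by rw [← e1, heq, e2]
    have hv : P2Verts q₁ = P2Verts q₂ := verts_eq_of_edges_eq hqe
    by_contra hne
    have hd := hQ.2 q₁ h1.1 q₂ h2.1 hne
    rw [hv] at hd
    have hm : q₂.1 ∈ P2Verts q₂ := by simp [P2Verts]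
    exact Finset.disjoint_left.mp hd hm hm

theorem stmt8 {V : Type*} [DecidableEq V] (G : SimpleGraph V)
    (P Q : Finset (V × V × V))
    (hP : IsMaximalP2Packing G P)
    (hQ : IsP2Packing G Q) (hcard : Q.card = P.card + 1)
    (hmax : ∀ Q' : Finset (V × V × V), IsP2Packing G Q' → Q'.card = P.card + 1 →
      sharedPathCount P Q' ≤ sharedPathCount P Q) :
    ∀ p ∈ P, (∀ q ∈ Q, P2Edges q ≠ P2Edges p) →
      ∃ q₁ ∈ Q, ∃ q₂ ∈ Q, q₁ ≠ q₂ ∧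
        1 ≤ (P2Verts p ∩ P2Verts q₁).card ∧
        1 ≤ (P2Verts p ∩ P2Verts q₂).card := by
  classical
  intro p hp hne
  set S := Q.filter (fun q => ¬ Disjoint (P2Verts p) (P2Verts q)) with hSdef
  by_cases h2 : 2 ≤ S.card
  · obtain ⟨q₁, hq₁, q₂, hq₂, hne12⟩ := Finset.one_lt_card.mp h2
    simp only [hSdef, mem_filter] at hq₁ hq₂
    refine ⟨q₁, hq₁.1, q₂, hq₂.1, hne12, ?_, ?_⟩
    · rw [Nat.one_le_iff_ne_zero, Ne, Finset.card_eq_zero, ← Ne,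
        ← Finset.nonempty_iff_ne_empty]
      exact Finset.not_disjoint_iff_nonempty_inter.mp hq₁.2
    · rw [Nat.one_le_iff_ne_zero, Ne, Finset.card_eq_zero, ← Ne,
        ← Finset.nonempty_iff_ne_empty]
      exact Finset.not_disjoint_iff_nonempty_inter.mp hq₂.2
  · exfalso
    push_neg at h2
    -- find q₀ ∈ Q, not shared, with all other q ∈ Q disjoint from p
    have hpnotQ : p ∉ Q := fun hpq => hne p hpq rfl
    obtain ⟨q₀, hq₀Q, hq₀ns, hq₀disj⟩ :
        ∃ q₀ ∈ Q, (¬ ∃ p' ∈ P, P2Edges p' = P2Edges q₀) ∧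
          ∀ q ∈ Q, q ≠ q₀ → Disjoint (P2Verts p) (P2Verts q) := by
      rcases Finset.eq_empty_or_nonempty S with hS0 | hS1
      · -- no path of Q meets p; pick any non-shared q₀
        have hall : ∀ q ∈ Q, Disjoint (P2Verts p) (P2Verts q) := by
          intro q hq
          by_contra hd
          have : q ∈ S := by simp [hSdef, hq, hd]
          rw [hS0] at this
          exact absurd this (Finset.notMem_empty _)
        have hlt : (Q.filter (fun q => ∃ p' ∈ P, P2Edges p' = P2Edges q)).card < Q.card := by
          calc (Q.filter (fun q => ∃ p' ∈ P, P2Edges p' = P2Edges q)).card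
              ≤ P.card := shared_le P hQ
            _ < Q.card := by omega
        obtain ⟨q₀, hq₀Q, hq₀n⟩ : ∃ q₀ ∈ Q, q₀ ∉ Q.filter (fun q => ∃ p' ∈ P, P2Edges p' = P2Edges q) := by
          by_contra hco
          push_neg at hco
          have : Q ⊆ Q.filter (fun q => ∃ p' ∈ P, P2Edges p' = P2Edges q) := hco
          exact absurd (Finset.card_le_card this) (by omega)
        refine ⟨q₀, hq₀Q, fun hcon => hq₀n (mem_filter.mpr ⟨hq₀Q, hcon⟩),
          fun q hq _ => hall q hq⟩
      · obtain ⟨q₀, hq₀S⟩ := hS1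
        have hSeq : S = {q₀} :=
          Finset.eq_singleton_iff_unique_mem.mpr ⟨hq₀S, fun x hx => by
            by_contra hxq
            have := Finset.one_lt_card.mpr ⟨x, hx, q₀, hq₀S, hxq⟩
            omega⟩
        simp only [hSdef, mem_filter] at hq₀S
        refine ⟨q₀, hq₀S.1, ?_, ?_⟩
        · rintro ⟨p', hp', hpe⟩
          have hv : P2Verts p' = P2Verts q₀ := verts_eq_of_edges_eq hpe
          have hpp' : p = p' := by
            by_contra hpp
            exact hq₀S.2 (hv ▸ hP.1.2 p hp p' hp' hpp)
          exact hne q₀ hq₀S.1 (by rw [← hpe, hpp'])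
        · intro q hq hqne
          by_contra hd
          have : q ∈ S := by simp [hSdef, hq, hd]
          rw [hSeq, Finset.mem_singleton] at this
          exact hqne this
    -- build the improved packing Q'
    set Q' := insert p (Q.erase q₀) with hQ'def
    have hpnot : p ∉ Q.erase q₀ := fun h => hpnotQ (Finset.mem_of_mem_erase h)
    have hQ'card : Q'.card = P.card + 1 := by
      rw [hQ'def, Finset.card_insert_of_notMem hpnot,
        Finset.card_erase_of_mem hq₀Q, hcard]
      omega
    have hQ'pack : IsP2Packing G Q' := by
      constructor
      · intro x hx
        rw [hQ'def, Finset.mem_insert] at hx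
        rcases hx with rfl | hx
        · exact hP.1.1 _ hp
        · exact hQ.1 x (Finset.mem_of_mem_erase hx)
      · intro x hx y hy hxy
        rw [hQ'def, Finset.mem_insert] at hx hy
        rcases hx with rfl | hx <;> rcases hy with rfl | hy
        · exact absurd rfl hxy
        · exact hq₀disj y (Finset.mem_of_mem_erase hy) (Finset.ne_of_mem_erase hy)
        · exact (hq₀disj x (Finset.mem_of_mem_erase hx) (Finset.ne_of_mem_erase hx)).symm
        · exact hQ.2 x (Finset.mem_of_mem_erase hx) y (Finset.mem_of_mem_erase hy) hxy
    have hsub : insert p (Q.filter (fun q => ∃ p' ∈ P, P2Edges p' = P2Edges q)) ⊆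
        Q'.filter (fun q => ∃ p' ∈ P, P2Edges p' = P2Edges q) := by
      intro x hx
      rw [Finset.mem_insert] at hx
      rcases hx with rfl | hx
      · rw [Finset.mem_filter]
        exact ⟨Finset.mem_insert_self _ _, _, hp, rfl⟩
      · rw [Finset.mem_filter] at hx ⊢
        refine ⟨?_, hx.2⟩
        rw [hQ'def, Finset.mem_insert]
        right
        exact Finset.mem_erase.mpr ⟨fun h => hq₀ns (h ▸ hx.2), hx.1⟩
    have hcount : sharedPathCount P Q < sharedPathCount P Q' := by
      have h1 : sharedPathCount P Q + 1 =
          (insert p (Q.filter (fun q => ∃ p' ∈ P, P2Edges p' = P2Edges q))).card := by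
        unfold sharedPathCount
        rw [Finset.card_insert_of_notMem (fun h => hpnotQ (Finset.mem_of_mem_filter _ h))]
      have h2 := Finset.card_le_card hsub
      unfold sharedPathCount at *
      omega
    exact absurd (hmax Q' hQ'pack hQ'card) (by omega)
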